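/- Define Z : ℂ × ℝ → ℂ by Z(β, α) = (1/√(2π)) · ∫_ℝ exp(−x²/2 + i·α·x³ + β·x) dx. Then for each fixed α the function β ↦ Z(β, α) is twice complex-differentiable on ℂ and satisfies, for all (β, α), the Dyson–Schwinger equation: 3·i·α·∂²Z/∂β² − ∂Z/∂β + β·Z(β, α) = 0. -/

import Mathlib

open MeasureTheory Real

/-- The generating function of the cubic model with source `β`:
`Z(β, α) = (1/√(2π)) ∫ exp(-x²/2 + iαx³ + βx) dx`. -/
noncomputable def cubicZ (β : ℂ) (α : ℝ) : ℂ :=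
  (1 / Real.sqrt (2 * π) : ℝ) *
    ∫ x : ℝ, Complex.exp (-(x : ℂ) ^ 2 / 2 + Complex.I * α * (x : ℂ) ^ 3 + β * x)

namespace CubicDS

open Filter Complex

noncomputable def g (α : ℝ) (β : ℂ) (x : ℝ) : ℂ :=
  Complex.exp (-(x : ℂ) ^ 2 / 2 + Complex.I * α * (x : ℂ) ^ 3 + β * x)

lemma norm_g (α : ℝ) (β : ℂ) (x : ℝ) :
    ‖g α β x‖ = Real.exp (-x ^ 2 / 2 + β.re * x) := by
  rw [g, Complex.norm_exp]
  congr 1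
  have : -(x : ℂ) ^ 2 / 2 + Complex.I * α * (x : ℂ) ^ 3 + β * x
      = Complex.ofReal (-x ^ 2 / 2) + Complex.I * Complex.ofReal (α * x ^ 3) + β * x := by
    push_cast; ring
  rw [this]
  simp [Complex.add_re, Complex.mul_re, ← Complex.ofReal_pow]

lemma continuous_g (α : ℝ) (β : ℂ) : Continuous (g α β) := by
  apply Complex.continuous_exp.comp
  continuity

lemma integrable_bound (n : ℕ) (c : ℝ) :
    Integrable (fun x : ℝ => |x| ^ n * Real.exp (-x ^ 2 / 2 + c * |x|)) := by
  have h4 : (0 : ℝ) < 4⁻¹ := by norm_num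
  apply Integrable.mono' (((integrable_exp_neg_mul_sq h4).const_mul
    ((n.factorial : ℝ) * Real.exp ((c + 1) ^ 2))))
  · apply Continuous.aestronglyMeasurable
    continuity
  · filter_upwards with x
    have hx : 0 ≤ |x| ^ n * Real.exp (-x ^ 2 / 2 + c * |x|) := by positivity
    rw [Real.norm_eq_abs, _root_.abs_of_nonneg hx]
    have h1 : |x| ^ n ≤ (n.factorial : ℝ) * Real.exp |x| := by
      have := Real.pow_div_factorial_le_exp (x := |x|) (abs_nonneg x) n
      have hf : (0 : ℝ) < (n.factorial : ℝ) := by positivity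
      calc |x| ^ n = (|x| ^ n / n.factorial) * n.factorial := by field_simp
        _ ≤ Real.exp |x| * n.factorial := by
            apply mul_le_mul_of_nonneg_right this hf.le
        _ = (n.factorial : ℝ) * Real.exp |x| := by ring
    calc |x| ^ n * Real.exp (-x ^ 2 / 2 + c * |x|)
        ≤ (n.factorial : ℝ) * Real.exp |x| * Real.exp (-x ^ 2 / 2 + c * |x|) := by
          apply mul_le_mul_of_nonneg_right h1 (Real.exp_pos _).le
      _ = (n.factorial : ℝ) * Real.exp (-x ^ 2 / 2 + (c + 1) * |x|) := by
          rw [mul_assoc, ← Real.exp_add]; ring_nf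
      _ ≤ (n.factorial : ℝ) * Real.exp ((c + 1) ^ 2 + -4⁻¹ * x ^ 2) := by
          apply mul_le_mul_of_nonneg_left _ (by positivity)
          apply Real.exp_le_exp.2
          nlinarith [sq_nonneg ((c + 1) - |x| / 2), _root_.sq_abs x]
      _ = (n.factorial : ℝ) * Real.exp ((c + 1) ^ 2) * Real.exp (-4⁻¹ * x ^ 2) := by
          rw [Real.exp_add, mul_assoc]

lemma norm_pow_g (α : ℝ) (β : ℂ) (n : ℕ) (x : ℝ) :
    ‖(x : ℂ) ^ n * g α β x‖ = |x| ^ n * Real.exp (-x ^ 2 / 2 + β.re * x) := by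
  rw [norm_mul, norm_pow, norm_g, Complex.norm_real, Real.norm_eq_abs]

lemma integrable_pow_g (α : ℝ) (β : ℂ) (n : ℕ) :
    Integrable (fun x : ℝ => (x : ℂ) ^ n * g α β x) := by
  apply Integrable.mono' (integrable_bound n |β.re|)
  · apply Continuous.aestronglyMeasurable
    exact (continuous_ofReal.pow n).mul (continuous_g α β)
  · filter_upwards with x
    rw [norm_pow_g]
    apply mul_le_mul_of_nonneg_left _ (by positivity)
    apply Real.exp_le_exp.2
    have : β.re * x ≤ |β.re| * |x| := by
      calc β.re * x ≤ |β.re * x| := le_abs_self _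
        _ = |β.re| * |x| := abs_mul _ _
    linarith

lemma hasDerivAt_integral (α : ℝ) (n : ℕ) (β₀ : ℂ) :
    HasDerivAt (fun β : ℂ => ∫ x : ℝ, (x : ℂ) ^ n * g α β x)
      (∫ x : ℝ, (x : ℂ) ^ (n + 1) * g α β₀ x) β₀ := by
  obtain ⟨c, hc⟩ : ∃ c : ℝ, c = ‖β₀‖ + 1 := ⟨_, rfl⟩
  have main := hasDerivAt_integral_of_dominated_loc_of_deriv_le
    (F := fun (β : ℂ) (x : ℝ) => (x : ℂ) ^ n * g α β x)
    (F' := fun (β : ℂ) (x : ℝ) => (x : ℂ) ^ (n + 1) * g α β x)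
    (x₀ := β₀) (μ := volume)
    (bound := fun x : ℝ => |x| ^ (n + 1) * Real.exp (-x ^ 2 / 2 + c * |x|))
    (Metric.ball_mem_nhds β₀ one_pos)
    (Eventually.of_forall fun β => ((continuous_ofReal.pow n).mul
      (continuous_g α β)).aestronglyMeasurable)
    (integrable_pow_g α β₀ n)
    ((continuous_ofReal.pow (n + 1)).mul (continuous_g α β₀)).aestronglyMeasurable
    ?_ (integrable_bound (n + 1) c) ?_
  · exact main.2
  · filter_upwards with x β hβ
    rw [norm_pow_g]
    apply mul_le_mul_of_nonneg_left _ (by positivity)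
    apply Real.exp_le_exp.2
    have hβc : |β.re| ≤ c := by
      rw [hc]
      have h1 : |β.re| ≤ ‖β‖ := abs_re_le_norm β
      have h2 : ‖β‖ ≤ ‖β₀‖ + ‖β - β₀‖ := by
        calc ‖β‖ = ‖β₀ + (β - β₀)‖ := by ring_nf
          _ ≤ ‖β₀‖ + ‖β - β₀‖ := norm_add_le _ _
      have h3 : ‖β - β₀‖ < 1 := by
        rwa [Metric.mem_ball, dist_eq_norm] at hβ
      linarith
    have : β.re * x ≤ |β.re| * |x| := by
      calc β.re * x ≤ |β.re * x| := le_abs_self _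
        _ = |β.re| * |x| := abs_mul _ _
    have h4 : |β.re| * |x| ≤ c * |x| := mul_le_mul_of_nonneg_right hβc (abs_nonneg x)
    have h5 : β.re * x ≤ c * |x| := this.trans h4
    linarith
  · filter_upwards with x β _
    have hu : HasDerivAt (fun β : ℂ => -(x : ℂ) ^ 2 / 2 + Complex.I * α * (x : ℂ) ^ 3 + β * x)
        (x : ℂ) β := by
      simpa using ((hasDerivAt_id β).mul_const (x : ℂ)).const_add
        (-(x : ℂ) ^ 2 / 2 + Complex.I * α * (x : ℂ) ^ 3)
    have := (hu.cexp).const_mul ((x : ℂ) ^ n)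
    refine this.congr_deriv ?_
    rw [g]; ring

lemma tendsto_g_atTop (α : ℝ) (β : ℂ) :
    Tendsto (fun x : ℝ => g α β x) atTop (nhds 0) := by
  rw [tendsto_zero_iff_norm_tendsto_zero]
  simp only [norm_g]
  apply Real.tendsto_exp_atBot.comp
  have h1 : Tendsto (fun x : ℝ => (x - β.re) ^ 2) atTop atTop :=
    (tendsto_pow_atTop two_ne_zero).comp (tendsto_atTop_add_const_right _ (-β.re) tendsto_id)
  have h2 : Tendsto (fun x : ℝ => -(x - β.re) ^ 2 / 2 + β.re ^ 2 / 2) atTop atBot := by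
    apply tendsto_atBot_add_const_right
    apply Tendsto.atBot_div_const (by norm_num : (0:ℝ) < 2)
    exact tendsto_neg_atBot_iff.mpr h1
  refine h2.congr fun x => by ring

lemma tendsto_g_atBot (α : ℝ) (β : ℂ) :
    Tendsto (fun x : ℝ => g α β x) atBot (nhds 0) := by
  rw [tendsto_zero_iff_norm_tendsto_zero]
  simp only [norm_g]
  apply Real.tendsto_exp_atBot.comp
  have h1 : Tendsto (fun x : ℝ => (x - β.re) ^ 2) atBot atTop := by
    have h0 : Tendsto (fun x : ℝ => -x + β.re) atBot atTop :=
      tendsto_atTop_add_const_right atBot β.re tendsto_neg_atBot_atTop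
    have := (tendsto_pow_atTop two_ne_zero).comp h0
    exact this.congr fun x => by simp only [Function.comp]; ring
  have h2 : Tendsto (fun x : ℝ => -(x - β.re) ^ 2 / 2 + β.re ^ 2 / 2) atBot atBot := by
    apply tendsto_atBot_add_const_right
    apply Tendsto.atBot_div_const (by norm_num : (0:ℝ) < 2)
    exact tendsto_neg_atBot_iff.mpr h1
  refine h2.congr fun x => by ring

lemma hasDerivAt_g_x (α : ℝ) (β : ℂ) (x : ℝ) :
    HasDerivAt (fun t : ℝ => g α β t)
      ((3 * Complex.I * α * (x : ℂ) ^ 2 - (x : ℂ) + β) * g α β x) x := by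
  have hU : HasDerivAt (fun z : ℂ => -z ^ 2 / 2 + Complex.I * α * z ^ 3 + β * z)
      (3 * Complex.I * α * (x : ℂ) ^ 2 - (x : ℂ) + β) (x : ℂ) := by
    have h1 := ((hasDerivAt_pow 2 (x : ℂ)).div_const 2).neg
    have h2 := (hasDerivAt_pow 3 (x : ℂ)).const_mul (Complex.I * α)
    have h3 := (hasDerivAt_id (x : ℂ)).const_mul β
    have := (h1.add h2).add h3
    convert this using 1
    · rfl
    · rfl
    · funext z; simp only [id_eq, Pi.add_apply, Pi.neg_apply]; ring
    · simp only [show (2:ℕ) - 1 = 1 from rfl, show (3:ℕ) - 1 = 2 from rfl]; push_cast; ring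
  have h := (hU.comp_ofReal).cexp
  have heq : (3 * Complex.I * α * (x : ℂ) ^ 2 - (x : ℂ) + β) * g α β x
      = Complex.exp (-(x : ℂ) ^ 2 / 2 + Complex.I * α * (x : ℂ) ^ 3 + β * x)
        * (3 * Complex.I * α * (x : ℂ) ^ 2 - (x : ℂ) + β) := by
    rw [g]; ring
  rw [heq]
  exact h

lemma integral_deriv_eq_zero {f f' : ℝ → ℂ} (hd : ∀ x, HasDerivAt f (f' x) x)
    (hint : Integrable f') (htop : Tendsto f atTop (nhds 0))
    (hbot : Tendsto f atBot (nhds 0)) : ∫ x : ℝ, f' x = 0 := by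
  have h1 : Tendsto (fun n : ℕ => ∫ x in (-(n : ℝ))..(n : ℝ), f' x) atTop
      (nhds (∫ x : ℝ, f' x)) :=
    intervalIntegral_tendsto_integral hint
      (tendsto_neg_atBot_iff.mpr tendsto_natCast_atTop_atTop) tendsto_natCast_atTop_atTop
  have h2 : ∀ n : ℕ, (∫ x in (-(n : ℝ))..(n : ℝ), f' x) = f n - f (-(n : ℝ)) := by
    intro n
    have hder : ∀ x ∈ Set.uIcc (-(n : ℝ)) (n : ℝ), HasDerivAt f (f' x) x := fun x _ => hd x
    exact intervalIntegral.integral_eq_sub_of_hasDerivAt hder hint.intervalIntegrable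
  have h3 : Tendsto (fun n : ℕ => f n - f (-(n : ℝ))) atTop (nhds (0 - 0)) :=
    (htop.comp tendsto_natCast_atTop_atTop).sub
      (hbot.comp (tendsto_neg_atBot_iff.mpr tendsto_natCast_atTop_atTop))
  rw [sub_zero] at h3
  exact tendsto_nhds_unique (h1.congr fun n => h2 n) h3

lemma key_identity (α : ℝ) (β : ℂ) :
    3 * Complex.I * α * (∫ x : ℝ, (x : ℂ) ^ 2 * g α β x)
      - (∫ x : ℝ, (x : ℂ) ^ 1 * g α β x)
      + β * (∫ x : ℝ, (x : ℂ) ^ 0 * g α β x) = 0 := by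
  have hint : Integrable (fun x : ℝ =>
      (3 * Complex.I * α * (x : ℂ) ^ 2 - (x : ℂ) + β) * g α β x) := by
    have := (((integrable_pow_g α β 2).const_mul (3 * Complex.I * α)).sub
      (integrable_pow_g α β 1)).add ((integrable_pow_g α β 0).const_mul β)
    refine this.congr ?_
    filter_upwards with x
    simp only [Pi.add_apply, Pi.sub_apply, g]
    ring
  have h0 : (∫ x : ℝ, (3 * Complex.I * α * (x : ℂ) ^ 2 - (x : ℂ) + β) * g α β x) = 0 :=
    integral_deriv_eq_zero (hasDerivAt_g_x α β) hint (tendsto_g_atTop α β) (tendsto_g_atBot α β)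
  have hsplit : (∫ x : ℝ, (3 * Complex.I * α * (x : ℂ) ^ 2 - (x : ℂ) + β) * g α β x)
      = 3 * Complex.I * α * (∫ x : ℝ, (x : ℂ) ^ 2 * g α β x)
        - (∫ x : ℝ, (x : ℂ) ^ 1 * g α β x)
        + β * (∫ x : ℝ, (x : ℂ) ^ 0 * g α β x) := by
    rw [← integral_const_mul, ← integral_const_mul, ← integral_sub, ← integral_add]
    · congr 1; funext x; simp only [g]; ring
    · exact ((integrable_pow_g α β 2).const_mul _).sub (integrable_pow_g α β 1)
    · exact (integrable_pow_g α β 0).const_mul β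
    · exact (integrable_pow_g α β 2).const_mul _
    · exact integrable_pow_g α β 1
  rw [← hsplit, h0]

lemma cubicZ_eq (α : ℝ) (β : ℂ) :
    cubicZ β α = ((1 / Real.sqrt (2 * π) : ℝ) : ℂ) * ∫ x : ℝ, (x : ℂ) ^ 0 * g α β x := by
  simp only [cubicZ, g, pow_zero, one_mul]

lemma hasDerivAt_cubicZ (α : ℝ) (β : ℂ) :
    HasDerivAt (fun b : ℂ => cubicZ b α)
      (((1 / Real.sqrt (2 * π) : ℝ) : ℂ) * ∫ x : ℝ, (x : ℂ) ^ 1 * g α β x) β := by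
  have := (hasDerivAt_integral α 0 β).const_mul ((1 / Real.sqrt (2 * π) : ℝ) : ℂ)
  refine HasDerivAt.congr_of_eventuallyEq this ?_
  filter_upwards with b
  rw [cubicZ_eq]

lemma deriv_cubicZ (α : ℝ) :
    deriv (fun b : ℂ => cubicZ b α)
      = fun β : ℂ => ((1 / Real.sqrt (2 * π) : ℝ) : ℂ) * ∫ x : ℝ, (x : ℂ) ^ 1 * g α β x :=
  funext fun β => (hasDerivAt_cubicZ α β).deriv

lemma hasDerivAt_deriv_cubicZ (α : ℝ) (β : ℂ) :
    HasDerivAt (deriv (fun b : ℂ => cubicZ b α))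
      (((1 / Real.sqrt (2 * π) : ℝ) : ℂ) * ∫ x : ℝ, (x : ℂ) ^ 2 * g α β x) β := by
  rw [deriv_cubicZ]
  exact (hasDerivAt_integral α 1 β).const_mul _

end CubicDS

/-- The Dyson–Schwinger equation of the cubic model: `Z` is twice complex-differentiable
in `β` and `3iα ∂²Z/∂β² - ∂Z/∂β + β Z = 0`. -/
theorem cubicZ_dyson_schwinger :
    (∀ α : ℝ, Differentiable ℂ (fun β : ℂ => cubicZ β α)) ∧
    (∀ α : ℝ, Differentiable ℂ (deriv (fun β : ℂ => cubicZ β α))) ∧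
    ∀ (β : ℂ) (α : ℝ),
      3 * Complex.I * α * deriv (deriv (fun b : ℂ => cubicZ b α)) β -
        deriv (fun b : ℂ => cubicZ b α) β + β * cubicZ β α = 0 := by
  refine ⟨fun α β => (CubicDS.hasDerivAt_cubicZ α β).differentiableAt,
    fun α β => (CubicDS.hasDerivAt_deriv_cubicZ α β).differentiableAt, fun β α => ?_⟩
  have h1 := (CubicDS.hasDerivAt_cubicZ α β).deriv
  have h2 := (CubicDS.hasDerivAt_deriv_cubicZ α β).deriv
  rw [h1, h2, CubicDS.cubicZ_eq α β]
  have := CubicDS.key_identity α β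
  set C : ℂ := ((1 / Real.sqrt (2 * π) : ℝ) : ℂ)
  set I2 := ∫ x : ℝ, (x : ℂ) ^ 2 * CubicDS.g α β x
  set I1 := ∫ x : ℝ, (x : ℂ) ^ 1 * CubicDS.g α β x
  set I0 := ∫ x : ℝ, (x : ℂ) ^ 0 * CubicDS.g α β x
  calc 3 * Complex.I * α * (C * I2) - C * I1 + β * (C * I0)
      = C * (3 * Complex.I * α * I2 - I1 + β * I0) := by ring
    _ = C * 0 := by rw [this]
    _ = 0 := mul_zero C
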